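/- Let C_n be the cycle graph on n vertices with n odd, n ≥ 3. Then C_n has a k-resolving set if and only if k ≤ n − 1, and for every integer k with 1 ≤ k ≤ n − 1 the k-metric dimension of C_n equals k + 1. -/

import Mathlib

/-- A finset `S` of vertices is a `k`-resolving set for `G`: any two distinct vertices `u, w`
have different distances to at least `k` vertices of `S`. -/
def IsKResolvingSet {V : Type*} [DecidableEq V] (G : SimpleGraph V) (k : ℕ) (S : Finset V) : Prop :=
  ∀ u w : V, u ≠ w → k ≤ (S.filter (fun v => G.dist u v ≠ G.dist w v)).card

namespace OddCycleAux

open SimpleGraph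
open scoped Fin.CommRing Fin.NatCast

/-- circular distance value -/
def g (n : ℕ) (x : Fin n) : ℕ := min x.val (n - x.val)

variable {n : ℕ} [NeZero n]

lemma val_neg' (x : Fin n) (hx : x.val ≠ 0) : (-x).val = n - x.val := by
  rw [Fin.neg_def]
  show (n - x.val) % n = n - x.val
  have := x.isLt
  exact Nat.mod_eq_of_lt (by omega)

lemma g_neg (x : Fin n) : g n (-x) = g n x := by
  rcases eq_or_ne x.val 0 with h | h
  · have hx : x = 0 := by
      apply Fin.ext; simpa using h
    rw [hx, neg_zero]
  · have hlt := x.isLt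
    have h2 : (-x).val = n - x.val := val_neg' x h
    unfold g
    rw [h2]
    omega

lemma val_one' (h2 : 2 ≤ n) : (1 : Fin n).val = 1 := by
  rw [Fin.val_one']
  exact Nat.mod_eq_of_lt (by omega)

lemma g_add_one (h2 : 2 ≤ n) (x : Fin n) : g n (x + 1) ≤ g n x + 1 := by
  have hlt := x.isLt
  have hv : (x + 1).val = (x.val + 1) % n := by
    rw [Fin.add_def, val_one' h2]
  rcases Nat.lt_or_ge (x.val + 1) n with h | h
  · rw [Nat.mod_eq_of_lt h] at hv
    unfold g; omega
  · have hz : (x.val + 1) % n = 0 := by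
      have : x.val + 1 = n := by omega
      simp [this]
    rw [hz] at hv
    unfold g; omega

lemma g_sub_one (h2 : 2 ≤ n) (x : Fin n) : g n (x - 1) ≤ g n x + 1 := by
  have h := g_add_one h2 (-x)
  rw [g_neg] at h
  have e : x - 1 = -(-x + 1) := by ring
  rw [e, g_neg]
  exact h

lemma g_le_walk_length (h3 : 3 ≤ n) {u v : Fin n}
    (p : (cycleGraph n).Walk u v) : g n (v - u) ≤ p.length := by
  induction p with
  | nil =>
    simp only [Walk.length_nil, sub_self]
    simp [g]
  | @cons a b c h p ih =>
    rw [cycleGraph_adj'] at h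
    rw [Walk.length_cons]
    rcases h with h | h
    · have hab : a - b = 1 := Fin.ext (by rw [h, val_one' (by omega)])
      have e : c - a = (c - b) - 1 := by rw [← hab]; ring
      rw [e]
      have := g_sub_one (by omega) (c - b)
      omega
    · have hab : b - a = 1 := Fin.ext (by rw [h, val_one' (by omega)])
      have e : c - a = (c - b) + 1 := by rw [← hab]; ring
      rw [e]
      have := g_add_one (by omega) (c - b)
      omega

lemma dist_le_nat (h3 : 3 ≤ n) (u : Fin n) (k : ℕ) :
    (cycleGraph n).dist u (u + (k : Fin n)) ≤ k := by
  induction k with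
  | zero => simp
  | succ k ih =>
    have hconn : (cycleGraph n).Connected := by
      have e : n = (n - 1) + 1 := by omega
      rw [e]; exact cycleGraph_connected
    have hcast : ((k + 1 : ℕ) : Fin n) = (k : Fin n) + 1 := by push_cast; ring
    rw [hcast, ← add_assoc]
    have hadj : (cycleGraph n).Adj (u + (k : Fin n)) (u + (k : Fin n) + 1) := by
      rw [cycleGraph_adj']
      right
      have e : u + (k : Fin n) + 1 - (u + (k : Fin n)) = 1 := by ring
      rw [e, val_one' (by omega)]
    calc (cycleGraph n).dist u (u + (k : Fin n) + 1)
        ≤ (cycleGraph n).dist u (u + (k : Fin n)) +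
          (cycleGraph n).dist (u + (k : Fin n)) (u + (k : Fin n) + 1) := hconn.dist_triangle
      _ ≤ k + 1 := by
          have : (cycleGraph n).dist (u + (k : Fin n)) (u + (k : Fin n) + 1) ≤ 1 :=
            dist_le (Walk.cons hadj Walk.nil)
          omega

lemma cycle_dist (h3 : 3 ≤ n) (u v : Fin n) :
    (cycleGraph n).dist u v = g n (v - u) := by
  apply le_antisymm
  · have h1 : (cycleGraph n).dist u v ≤ (v - u).val := by
      have h := dist_le_nat h3 u (v - u).val
      rwa [Fin.cast_val_eq_self, add_sub_cancel] at h
    have h2 : (cycleGraph n).dist u v ≤ (u - v).val := by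
      rw [SimpleGraph.dist_comm]
      have h := dist_le_nat h3 v (u - v).val
      rwa [Fin.cast_val_eq_self, add_sub_cancel] at h
    have e : u - v = -(v - u) := by ring
    rw [e] at h2
    rcases eq_or_ne (v - u).val 0 with h0 | h0
    · unfold g; omega
    · rw [val_neg' _ h0] at h2
      unfold g; omega
  · obtain ⟨p, hp⟩ : ∃ p : (cycleGraph n).Walk u v, p.length = (cycleGraph n).dist u v :=
      (cycleGraph_preconnected u v).exists_walk_length_eq_dist
    rw [← hp]
    exact g_le_walk_length h3 p

end OddCycleAux

namespace OddCycleAux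
open SimpleGraph
open scoped Fin.CommRing Fin.NatCast
variable {n : ℕ} [NeZero n]

/-- key equation: if v is equidistant from u and w (u ≠ w), then 2*(v-w).val + (w-u).val ∈ {n, 2n} -/
lemma equi_eq (h3 : 3 ≤ n) {u w v : Fin n} (huw : u ≠ w)
    (h : (cycleGraph n).dist u v = (cycleGraph n).dist w v) :
    2 * (v - w).val + (w - u).val = n ∨ 2 * (v - w).val + (w - u).val = 2 * n := by
  rw [cycle_dist h3, cycle_dist h3] at h
  set a := (v - u).val with ha
  set b := (v - w).val with hb
  set c := (w - u).val with hc
  have hab : a ≠ b := by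
    intro he
    exact huw (by
      have h' : v - u = v - w := Fin.ext he
      exact sub_right_inj.mp h')
  have halt : a < n := (v - u).isLt
  have hblt : b < n := (v - w).isLt
  have hclt : c < n := (w - u).isLt
  have habc : a = (b + c) % n := by
    have e : v - u = (v - w) + (w - u) := by ring
    rw [ha, e, Fin.add_def]
  have hmod : a = b + c ∨ a + n = b + c := by
    rcases Nat.lt_or_ge (b + c) n with hlt | hge
    · left; rw [habc, Nat.mod_eq_of_lt hlt]
    · right
      have : (b + c) % n = b + c - n := by
        rw [Nat.mod_eq_sub_mod hge, Nat.mod_eq_of_lt (by omega)]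
      omega
  have hc0 : c ≠ 0 := by
    intro he
    exact huw (by
      have : w - u = 0 := Fin.ext (by rw [Fin.val_zero]; exact he)
      have := sub_eq_zero.mp this
      exact this.symm)
  unfold g at h
  omega

lemma equi_unique (h3 : 3 ≤ n) (hodd : Odd n) {u w : Fin n} (huw : u ≠ w) {v₁ v₂ : Fin n}
    (h1 : (cycleGraph n).dist u v₁ = (cycleGraph n).dist w v₁)
    (h2 : (cycleGraph n).dist u v₂ = (cycleGraph n).dist w v₂) : v₁ = v₂ := by
  have e1 := equi_eq h3 huw h1
  have e2 := equi_eq h3 huw h2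
  obtain ⟨m, hm⟩ := hodd
  have hb : (v₁ - w).val = (v₂ - w).val := by omega
  have h' : v₁ - w = v₂ - w := Fin.ext hb
  have := congrArg (fun x => x + w) h'
  simpa using this

/-- every vertex has a pair of distinct vertices equidistant from it -/
lemma equi_exists (h3 : 3 ≤ n) (v : Fin n) :
    (v + 1) ≠ (v - 1) ∧
    (cycleGraph n).dist (v + 1) v = (cycleGraph n).dist (v - 1) v := by
  constructor
  · intro he
    have h2 : (2 : Fin n) = 0 := by
      have := sub_eq_zero.mpr he
      calc (2 : Fin n) = (v+1) - (v-1) := by ring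
        _ = 0 := this
    have hv2 : ((2 : Fin n)).val = 2 := by
      have : ((2 : Fin n)) = ((2 : ℕ) : Fin n) := by norm_num
      rw [this, Fin.val_natCast]
      exact Nat.mod_eq_of_lt (by omega)
    rw [h2] at hv2
    simp at hv2
  · rw [cycle_dist h3, cycle_dist h3]
    have e1 : v - (v + 1) = -1 := by ring
    have e2 : v - (v - 1) = 1 := by ring
    rw [e1, e2, g_neg]

end OddCycleAux

/-- The odd cycle `C_n` (`n ≥ 3`, `n` odd) has a `k`-resolving set if and only if `k ≤ n - 1`,
and for `1 ≤ k ≤ n - 1` its `k`-metric dimension (least size of a `k`-resolving set) is `k + 1`. -/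
theorem oddCycle_kMetricDimension (n : ℕ) (hn : 3 ≤ n) (hodd : Odd n) :
    (∀ k : ℕ, (∃ S : Finset (Fin n), IsKResolvingSet (SimpleGraph.cycleGraph n) k S) ↔
      k ≤ n - 1) ∧
    ∀ k : ℕ, 1 ≤ k → k ≤ n - 1 →
      sInf {m : ℕ | ∃ S : Finset (Fin n),
        IsKResolvingSet (SimpleGraph.cycleGraph n) k S ∧ S.card = m} = k + 1 := by
  haveI : NeZero n := ⟨by omega⟩
  set G := SimpleGraph.cycleGraph n with hG
  -- any pair of distinct vertices is resolved by all but at most one vertex of S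
  have key : ∀ (S : Finset (Fin n)) (u w : Fin n), u ≠ w →
      S.card - 1 ≤ (S.filter (fun v => G.dist u v ≠ G.dist w v)).card := by
    intro S u w huw
    have hsplit := Finset.card_filter_add_card_filter_not
      (s := S) (p := fun v => G.dist u v ≠ G.dist w v)
    have hsub : (S.filter (fun v => ¬ G.dist u v ≠ G.dist w v)).card ≤ 1 := by
      apply Finset.card_le_one.mpr
      intro a ha b hb
      simp only [Finset.mem_filter, not_not] at ha hb
      exact OddCycleAux.equi_unique hn hodd huw ha.2 hb.2
    omega
  -- any k-resolving set has cardinality ≥ k+1 (for k ≥ 1)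
  have lb : ∀ (k : ℕ) (S : Finset (Fin n)), 1 ≤ k → IsKResolvingSet G k S →
      k + 1 ≤ S.card := by
    intro k S hk hS
    have h01 : (0 : Fin n) ≠ 1 := by
      intro h
      have := congrArg Fin.val h
      rw [OddCycleAux.val_one' (by omega)] at this
      simp at this
    have h1 := hS 0 1 h01
    have hpos : 0 < (S.filter (fun v => G.dist 0 v ≠ G.dist 1 v)).card := by omega
    obtain ⟨v₀, hv₀⟩ := Finset.card_pos.mp hpos
    have hv₀S : v₀ ∈ S := (Finset.mem_filter.mp hv₀).1
    obtain ⟨hne, heq⟩ := OddCycleAux.equi_exists (n := n) hn v₀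
    have h2 := hS (v₀ + 1) (v₀ - 1) hne
    have hsub : (S.filter (fun v => G.dist (v₀+1) v ≠ G.dist (v₀-1) v)) ⊆ S.erase v₀ := by
      intro v hv
      rw [Finset.mem_filter] at hv
      rw [Finset.mem_erase]
      refine ⟨?_, hv.1⟩
      intro hvv
      subst hvv
      exact hv.2 heq
    have h3 := Finset.card_le_card hsub
    rw [Finset.card_erase_of_mem hv₀S] at h3
    have hm : 1 ≤ S.card := Finset.card_pos.mpr ⟨v₀, hv₀S⟩
    omega
  constructor
  · intro k
    constructor
    · rintro ⟨S, hS⟩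
      obtain ⟨hne, heq⟩ := OddCycleAux.equi_exists (n := n) hn 0
      have h2 := hS (0 + 1) (0 - 1) hne
      have hsub : (S.filter (fun v => G.dist (0+1) v ≠ G.dist (0-1) v)) ⊆
          Finset.univ.erase (0 : Fin n) := by
        intro v hv
        rw [Finset.mem_filter] at hv
        rw [Finset.mem_erase]
        refine ⟨?_, Finset.mem_univ _⟩
        intro hvv
        subst hvv
        exact hv.2 heq
      have h3 := Finset.card_le_card hsub
      rw [Finset.card_erase_of_mem (Finset.mem_univ _), Finset.card_univ,
        Fintype.card_fin] at h3
      omega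
    · intro hk
      refine ⟨Finset.univ, fun u w huw => ?_⟩
      have := key Finset.univ u w huw
      rw [Finset.card_univ, Fintype.card_fin] at this
      omega
  · intro k hk1 hk2
    obtain ⟨S, hSsub, hScard⟩ := Finset.exists_subset_card_eq
      (s := (Finset.univ : Finset (Fin n))) (n := k + 1)
      (by rw [Finset.card_univ, Fintype.card_fin]; omega)
    have hmem : k + 1 ∈ {m : ℕ | ∃ S : Finset (Fin n),
        IsKResolvingSet G k S ∧ S.card = m} := by
      refine ⟨S, fun u w huw => ?_, hScard⟩
      have := key S u w huw
      omega
    refine le_antisymm (Nat.sInf_le hmem) (le_csInf ⟨k + 1, hmem⟩ ?_)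
    rintro m ⟨S', hS', rfl⟩
    exact lb k S' hk1 hS'
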